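/- Let S̄ be a global control semigroup. For every metric space X: smdim_{Trunc_{**}(S̄)} X = m-dim_S̄ X and asdim_{Trunc^{**}(S̄)} X = M-dim_S̄ X. -/

import Mathlib

open Filter Set Metric Topology
open scoped NNReal ENNReal

/-- A large-scale (asymptotic) dim-control function: continuous, increasing,
eventually at least the identity, tending to infinity. -/
def IsLSControl (f : ℝ≥0 → ℝ≥0) : Prop :=
  Continuous f ∧ Monotone f ∧ (∀ᶠ x in atTop, x ≤ f x) ∧ Tendsto f atTop atTop

/-- Asymptotically linear: coincides with a linear function on a neighborhood of infinity. -/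
def IsAsympLinear (f : ℝ≥0 → ℝ≥0) : Prop :=
  ∃ a b : ℝ≥0, ∀ᶠ x in atTop, f x = a * x + b

/-- A (large-scale) control semigroup. -/
def IsControlSemigroup (S : Set (ℝ≥0 → ℝ≥0)) : Prop :=
  (∀ f ∈ S, IsLSControl f) ∧
  (∀ f, IsLSControl f → IsAsympLinear f → f ∈ S) ∧
  (∀ f ∈ S, ∀ g ∈ S, f ∘ g ∈ S)

/-- A family of subsets is `s`-disjoint if distinct members are at distance `> s`. -/
def SDisjoint {X : Type*} [MetricSpace X] (s : ℝ≥0) (𝒰 : Set (Set X)) : Prop :=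
  ∀ U ∈ 𝒰, ∀ V ∈ 𝒰, U ≠ V → ∀ x ∈ U, ∀ y ∈ V, (s : ℝ) < dist x y

/-- A family of subsets is `D`-bounded if each member has diameter at most `D`. -/
def BoundedBy {X : Type*} [MetricSpace X] (D : ℝ≥0) (𝒰 : Set (Set X)) : Prop :=
  ∀ U ∈ 𝒰, EMetric.diam U ≤ (D : ℝ≥0∞)

/-- `asdim_S X ≤ n`. -/
def ASDimLE (S : Set (ℝ≥0 → ℝ≥0)) (X : Type*) [MetricSpace X] (n : ℕ) : Prop :=
  ∃ f ∈ S, ∃ s₀ : ℝ≥0, ∀ s : ℝ≥0, s₀ ≤ s →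
    ∃ 𝒰 : Fin (n + 1) → Set (Set X),
      (⋃ i, ⋃₀ 𝒰 i) = univ ∧ ∀ i, SDisjoint s (𝒰 i) ∧ BoundedBy (f s) (𝒰 i)

/-- The `S`-controlled asymptotic dimension, as an element of `ℕ∞`. -/
noncomputable def ASDim (S : Set (ℝ≥0 → ℝ≥0)) (X : Type*) [MetricSpace X] : ℕ∞ :=
  sInf {k : ℕ∞ | ∃ n : ℕ, k = n ∧ ASDimLE S X n}

/-- `S₁ ⪯ S₂` : `S₂` is finer than `S₁`. -/
def Preceq (S₁ S₂ : Set (ℝ≥0 → ℝ≥0)) : Prop :=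
  ∀ f ∈ S₂, ∃ g ∈ S₁, ∀ᶠ x in atTop, f x ≤ g x

/-- A small-scale dim-control function. -/
def IsSSControl (f : ℝ≥0 → ℝ≥0) : Prop :=
  Continuous f ∧ Monotone f ∧ f 0 = 0 ∧ ∀ᶠ x in 𝓝[>] (0 : ℝ≥0), x ≤ f x

/-- Coincides with a linear function on a neighborhood of `0`. -/
def IsLinearNearZero (f : ℝ≥0 → ℝ≥0) : Prop :=
  ∃ a b : ℝ≥0, ∀ᶠ x in 𝓝 (0 : ℝ≥0), f x = a * x + b

/-- A small-scale control semigroup. -/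
def IsSSControlSemigroup (ξ : Set (ℝ≥0 → ℝ≥0)) : Prop :=
  (∀ f ∈ ξ, IsSSControl f) ∧
  (∀ f, IsSSControl f → IsLinearNearZero f → f ∈ ξ) ∧
  (∀ f ∈ ξ, ∀ g ∈ ξ, f ∘ g ∈ ξ)

/-- A global dim-control function. -/
def IsGlobalControl (f : ℝ≥0 → ℝ≥0) : Prop :=
  Continuous f ∧ Monotone f ∧ f 0 = 0 ∧ Tendsto f atTop atTop ∧
    (∀ᶠ x in 𝓝[>] (0 : ℝ≥0), x ≤ f x) ∧ (∀ᶠ x in atTop, x ≤ f x)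

/-- A global control semigroup. -/
def IsGlobalControlSemigroup (S : Set (ℝ≥0 → ℝ≥0)) : Prop :=
  (∀ f ∈ S, IsGlobalControl f) ∧
  (∀ f, IsGlobalControl f → IsLinearNearZero f → IsAsympLinear f → f ∈ S) ∧
  (∀ f ∈ S, ∀ g ∈ S, f ∘ g ∈ S)

/-- `smdim_ξ X ≤ n`. -/
def SMDimLE (ξ : Set (ℝ≥0 → ℝ≥0)) (X : Type*) [MetricSpace X] (n : ℕ) : Prop :=
  ∃ f ∈ ξ, ∃ s₀ : ℝ≥0, 0 < s₀ ∧ ∀ s : ℝ≥0, 0 < s → s ≤ s₀ →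
    ∃ 𝒰 : Fin (n + 1) → Set (Set X),
      (⋃ i, ⋃₀ 𝒰 i) = univ ∧ ∀ i, SDisjoint s (𝒰 i) ∧ BoundedBy (f s) (𝒰 i)

/-- The `ξ`-controlled small-scale dimension. -/
noncomputable def SMDim (ξ : Set (ℝ≥0 → ℝ≥0)) (X : Type*) [MetricSpace X] : ℕ∞ :=
  sInf {k : ℕ∞ | ∃ n : ℕ, k = n ∧ SMDimLE ξ X n}

/-- `dim_S̄ X ≤ n` (global dimension). -/
def GDimLE (S : Set (ℝ≥0 → ℝ≥0)) (X : Type*) [MetricSpace X] (n : ℕ) : Prop :=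
  ∃ f ∈ S, ∀ s : ℝ≥0, 0 < s →
    ∃ 𝒰 : Fin (n + 1) → Set (Set X),
      (⋃ i, ⋃₀ 𝒰 i) = univ ∧ ∀ i, SDisjoint s (𝒰 i) ∧ BoundedBy (f s) (𝒰 i)

/-- The `S̄`-controlled global dimension. -/
noncomputable def GDim (S : Set (ℝ≥0 → ℝ≥0)) (X : Type*) [MetricSpace X] : ℕ∞ :=
  sInf {k : ℕ∞ | ∃ n : ℕ, k = n ∧ GDimLE S X n}

/-- Large-scale truncation `Trunc^{**}(S̄)`. -/
def TruncInf (S : Set (ℝ≥0 → ℝ≥0)) : Set (ℝ≥0 → ℝ≥0) :=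
  {g | IsLSControl g ∧ ∃ f ∈ S, ∀ᶠ x in atTop, g x = f x}

/-- Small-scale truncation `Trunc_{**}(S̄)`. -/
def TruncZero (S : Set (ℝ≥0 → ℝ≥0)) : Set (ℝ≥0 → ℝ≥0) :=
  {g | IsSSControl g ∧ ∃ f ∈ S, ∀ᶠ x in 𝓝 (0 : ℝ≥0), g x = f x}

/-- The linked set `Link(ξ, S)`. -/
def Link (ξ S : Set (ℝ≥0 → ℝ≥0)) : Set (ℝ≥0 → ℝ≥0) :=
  {g | Continuous g ∧ Monotone g ∧
    ∃ g₁ ∈ ξ, ∃ g₂ ∈ S, (∀ᶠ x in 𝓝 (0 : ℝ≥0), g x = g₁ x) ∧ (∀ᶠ x in atTop, g x = g₂ x)}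

/-- The distance function of an explicitly given metric space structure. -/
def MDist {X : Type*} (m : MetricSpace X) (x y : X) : ℝ :=
  @dist X m.toPseudoMetricSpace.toDist x y

namespace DimAux
open Filter Set Metric Topology
open scoped NNReal ENNReal

variable {X : Type*}

lemma boundedBy_iff [MetricSpace X] (D : ℝ≥0) (𝒰 : Set (Set X)) :
    BoundedBy D 𝒰 ↔ ∀ U ∈ 𝒰, ∀ x ∈ U, ∀ y ∈ U, dist x y ≤ (D:ℝ) := by
  unfold BoundedBy
  refine forall₂_congr fun U _ => ?_
  show Metric.ediam U ≤ _ ↔ _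
  rw [Metric.ediam_le_iff]
  refine forall₂_congr fun x _ => forall₂_congr fun y _ => ?_
  rw [edist_dist, ← ENNReal.ofReal_coe_nnreal, ENNReal.ofReal_le_ofReal_iff D.coe_nonneg]

lemma nhdsGT_extract (p : ℝ≥0 → Prop) (h : ∀ᶠ x in 𝓝[>] (0:ℝ≥0), p x) :
    ∃ η : ℝ≥0, 0 < η ∧ ∀ x, 0 < x → x < η → p x := by
  rw [eventually_iff, Metric.mem_nhdsWithin_iff] at h
  obtain ⟨ε, hε, h⟩ := h
  refine ⟨⟨ε, hε.le⟩, by exact_mod_cast hε, fun x hx hxε => ?_⟩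
  refine h ⟨?_, hx⟩
  rw [mem_ball, NNReal.dist_eq]
  replace hxε : (x:ℝ) < ε := NNReal.coe_lt_coe.2 hxε
  simpa using hxε

lemma nhds_extract (p : ℝ≥0 → Prop) (h : ∀ᶠ x in 𝓝 (0:ℝ≥0), p x) :
    ∃ η : ℝ≥0, 0 < η ∧ ∀ x, x < η → p x := by
  rw [eventually_iff, Metric.mem_nhds_iff] at h
  obtain ⟨ε, hε, h⟩ := h
  refine ⟨⟨ε, hε.le⟩, by exact_mod_cast hε, fun x hx => ?_⟩
  apply h
  rw [mem_ball, NNReal.dist_eq]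
  replace hx : (x:ℝ) < ε := NNReal.coe_lt_coe.2 hx
  simpa using hx

lemma linear_mem {Sb : Set (ℝ≥0 → ℝ≥0)} (hSb : IsGlobalControlSemigroup Sb)
    (a : ℝ≥0) (ha : 1 ≤ a) : (fun x => a * x) ∈ Sb := by
  refine hSb.2.1 _ ⟨continuous_const.mul continuous_id, fun x y hxy => mul_le_mul_right hxy a,
    mul_zero a, ?_, Eventually.of_forall fun x => le_mul_of_one_le_left zero_le ha,
    Eventually.of_forall fun x => le_mul_of_one_le_left zero_le ha⟩
    ⟨a, 0, Eventually.of_forall fun x => (add_zero _).symm⟩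
    ⟨a, 0, Eventually.of_forall fun x => (add_zero _).symm⟩
  exact tendsto_atTop_mono (fun x => le_mul_of_one_le_left zero_le ha) tendsto_id

lemma trivialCover [MetricSpace X] (n : ℕ) (s D : ℝ≥0) (hD : ∀ x y : X, dist x y ≤ (D:ℝ)) :
    ∃ 𝒰 : Fin (n + 1) → Set (Set X),
      (⋃ i, ⋃₀ 𝒰 i) = univ ∧ ∀ i, SDisjoint s (𝒰 i) ∧ BoundedBy D (𝒰 i) := by
  refine ⟨fun i => if i = 0 then {univ} else ∅, ?_, fun i => ⟨?_, ?_⟩⟩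
  · refine eq_univ_of_forall fun x => mem_iUnion.2 ⟨0, ?_⟩
    simp
  · intro U hU V hV hUV
    by_cases h : i = 0
    · subst h; simp only [if_pos rfl, mem_singleton_iff] at hU hV
      exact absurd (hU.trans hV.symm) hUV
    · simp [h] at hU
  · rw [boundedBy_iff]
    intro U hU x hx y hy
    exact hD x y

lemma singletonCover [MetricSpace X] (n : ℕ) (s D : ℝ≥0)
    (hs : ∀ x y : X, x ≠ y → (s:ℝ) < dist x y) :
    ∃ 𝒰 : Fin (n + 1) → Set (Set X),
      (⋃ i, ⋃₀ 𝒰 i) = univ ∧ ∀ i, SDisjoint s (𝒰 i) ∧ BoundedBy D (𝒰 i) := by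
  refine ⟨fun i => if i = 0 then (range fun x : X => ({x} : Set X)) else ∅, ?_, fun i => ⟨?_, ?_⟩⟩
  · refine eq_univ_of_forall fun x => mem_iUnion.2 ⟨0, ?_⟩
    simp only [if_pos rfl]
    exact ⟨{x}, mem_range_self x, rfl⟩
  · intro U hU V hV hUV x hx y hy
    by_cases h : i = 0
    · simp only [if_pos h, mem_range] at hU hV
      obtain ⟨u, rfl⟩ := hU
      obtain ⟨v, rfl⟩ := hV
      rw [mem_singleton_iff] at hx hy
      subst hx; subst hy
      exact hs x y (fun hxy => hUV (by rw [hxy]))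
    · simp [h] at hU
  · rw [boundedBy_iff]
    intro U hU x hx y hy
    by_cases h : i = 0
    · simp only [if_pos h, mem_range] at hU
      obtain ⟨u, rfl⟩ := hU
      rw [mem_singleton_iff] at hx hy
      subst hx; subst hy
      simp
    · simp [h] at hU

end DimAux

namespace DimAux
open Filter Set Metric Topology
open scoped NNReal ENNReal

variable {X : Type*}

lemma smdim_of_gdim (m m' : MetricSpace X) {Sb : Set (ℝ≥0 → ℝ≥0)}
    (hSb : IsGlobalControlSemigroup Sb)
    (h' : ∀ x y : X, MDist m' x y = min (MDist m x y) 1) {n : ℕ}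
    (H : @GDimLE Sb X m' n) : @SMDimLE (TruncZero Sb) X m n := by
  simp only [MDist] at h'
  obtain ⟨f, hfS, hcov⟩ := H
  obtain ⟨hfc, hfm, hf0, hftop, hfz, hfinf⟩ := hSb.1 f hfS
  have hfT : f ∈ TruncZero Sb :=
    ⟨⟨hfc, hfm, hf0, hfz⟩, f, hfS, Eventually.of_forall fun _ => rfl⟩
  have h1 : ∀ᶠ x in 𝓝 (0:ℝ≥0), f x < 1 := by
    have := hfc.continuousAt (x := (0:ℝ≥0))
    exact this.eventually_lt continuousAt_const (by rw [hf0]; exact one_pos)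
  obtain ⟨δ, hδ, hδ1⟩ := nhds_extract _ h1
  refine ⟨f, hfT, min δ 1 / 2, ?_, fun s hs hss => ?_⟩
  · have : (0:ℝ≥0) < min δ 1 := lt_min hδ one_pos
    positivity
  · have hsδ : s < min δ 1 := lt_of_le_of_lt hss (NNReal.half_lt_self (lt_min hδ one_pos).ne')
    have hs1 : s < 1 := hsδ.trans_le (min_le_right _ _)
    have hfs1 : f s < 1 := hδ1 s (hsδ.trans_le (min_le_left _ _))
    obtain ⟨𝒰, hcover, hprop⟩ := hcov s hs
    refine ⟨𝒰, hcover, fun i => ⟨?_, ?_⟩⟩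
    · intro U hU V hV hUV x hx y hy
      have := (hprop i).1 U hU V hV hUV x hx y hy
      rw [h'] at this
      exact this.trans_le (min_le_left _ _)
    · rw [@boundedBy_iff X m]
      have hb := (@boundedBy_iff X m' (f s) (𝒰 i)).1 (hprop i).2
      intro U hU x hx y hy
      have := hb U hU x hx y hy
      rw [h'] at this
      rcases le_or_gt 1 (@dist X m.toPseudoMetricSpace.toDist x y) with hd | hd
      · exfalso
        rw [min_eq_right hd] at this
        have : (1:ℝ) < 1 := lt_of_le_of_lt this (by exact_mod_cast hfs1)
        exact lt_irrefl _ this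
      · rwa [min_eq_left hd.le] at this

lemma asdim_of_gdim (m m'' : MetricSpace X) {Sb : Set (ℝ≥0 → ℝ≥0)}
    (hSb : IsGlobalControlSemigroup Sb)
    (h'' : ∀ x y : X, x ≠ y → MDist m'' x y = max 1 (MDist m x y)) {n : ℕ}
    (H : @GDimLE Sb X m'' n) : @ASDimLE (TruncInf Sb) X m n := by
  simp only [MDist] at h''
  obtain ⟨f, hfS, hcov⟩ := H
  obtain ⟨hfc, hfm, hf0, hftop, hfz, hfinf⟩ := hSb.1 f hfS
  have hfT : f ∈ TruncInf Sb :=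
    ⟨⟨hfc, hfm, hfinf, hftop⟩, f, hfS, Eventually.of_forall fun _ => rfl⟩
  refine ⟨f, hfT, 1, fun s hs => ?_⟩
  have hs0 : (0:ℝ≥0) < s := lt_of_lt_of_le one_pos hs
  obtain ⟨𝒰, hcover, hprop⟩ := hcov s hs0
  refine ⟨𝒰, hcover, fun i => ⟨?_, ?_⟩⟩
  · intro U hU V hV hUV x hx y hy
    have hd := (hprop i).1 U hU V hV hUV x hx y hy
    have hxy : x ≠ y := by
      rintro rfl
      rw [@dist_self X m''.toPseudoMetricSpace] at hd
      exact absurd hd (not_lt.2 s.coe_nonneg)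
    rw [h'' x y hxy] at hd
    rcases lt_max_iff.1 hd with h1 | h1
    · exact absurd h1 (not_lt.2 (by exact_mod_cast hs))
    · exact h1
  · rw [@boundedBy_iff X m]
    have hb := (@boundedBy_iff X m'' (f s) (𝒰 i)).1 (hprop i).2
    intro U hU x hx y hy
    by_cases hxy : x = y
    · subst hxy
      rw [@dist_self X m.toPseudoMetricSpace]
      exact (f s).coe_nonneg
    · have := hb U hU x hx y hy
      rw [h'' x y hxy] at this
      exact le_trans (le_max_right _ _) this

end DimAux

namespace DimAux
open Filter Set Metric Topology
open scoped NNReal ENNReal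

variable {X : Type*}

lemma gdim_of_smdim (m m' : MetricSpace X) {Sb : Set (ℝ≥0 → ℝ≥0)}
    (hSb : IsGlobalControlSemigroup Sb)
    (h' : ∀ x y : X, MDist m' x y = min (MDist m x y) 1) {n : ℕ}
    (H : @SMDimLE (TruncZero Sb) X m n) : @GDimLE Sb X m' n := by
  simp only [MDist] at h'
  obtain ⟨g, ⟨⟨hgc, hgm, hg0, hgz⟩, f, hfS, hgf⟩, s₀, hs₀, hcov⟩ := H
  obtain ⟨hfc, hfm, hf0, hftop, hfz, hfinf⟩ := hSb.1 f hfS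
  obtain ⟨η₁, hη₁, hgfeq⟩ := nhds_extract _ hgf
  obtain ⟨η₂, hη₂, hfid⟩ := nhdsGT_extract _ hfz
  set ε : ℝ≥0 := min (min s₀ (η₁ / 2)) (min (η₂ / 2) 2⁻¹) with hεdef
  have hε : 0 < ε := by
    refine lt_min (lt_min hs₀ ?_) (lt_min ?_ ?_) <;> positivity
  have hεs₀ : ε ≤ s₀ := (min_le_left _ _).trans (min_le_left _ _)
  have hεη₁ : ε < η₁ := lt_of_le_of_lt ((min_le_left _ _).trans (min_le_right _ _))
    (NNReal.half_lt_self hη₁.ne')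
  have hεη₂ : ε < η₂ := lt_of_le_of_lt ((min_le_right _ _).trans (min_le_left _ _))
    (NNReal.half_lt_self hη₂.ne')
  have hε1 : ε < 1 := lt_of_le_of_lt ((min_le_right _ _).trans (min_le_right _ _)) (by rw [← NNReal.coe_lt_coe]; norm_num)
  set c : ℝ≥0 := f ε with hcdef
  have hc : 0 < c := lt_of_lt_of_le hε (hfid ε hε hεη₂)
  set a : ℝ≥0 := 1 + c⁻¹ with hadef
  have ha1 : (1:ℝ≥0) ≤ a := le_self_add
  have hac : (1:ℝ≥0) ≤ a * c := by
    rw [hadef, add_mul, one_mul, inv_mul_cancel₀ hc.ne']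
    exact le_add_self
  refine ⟨(fun x => a * x) ∘ f, hSb.2.2 _ (linear_mem hSb a ha1) f hfS, fun s hs => ?_⟩
  rcases le_total s ε with hsε | hsε
  · obtain ⟨𝒰, hcover, hprop⟩ := hcov s hs (hsε.trans hεs₀)
    have hgs : g s = f s := hgfeq s (lt_of_le_of_lt hsε hεη₁)
    have hfsafs : (g s : ℝ) ≤ ((a * f s : ℝ≥0) : ℝ) := by
      rw [hgs]
      exact_mod_cast le_mul_of_one_le_left zero_le ha1
    refine ⟨𝒰, hcover, fun i => ⟨?_, ?_⟩⟩
    · intro U hU V hV hUV x hx y hy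
      have hd := (hprop i).1 U hU V hV hUV x hx y hy
      rw [h']
      refine lt_min hd ?_
      exact_mod_cast lt_of_le_of_lt hsε hε1
    · rw [@boundedBy_iff X m']
      have hb := (@boundedBy_iff X m (g s) (𝒰 i)).1 (hprop i).2
      intro U hU x hx y hy
      rw [h']
      exact le_trans (min_le_left _ _) ((hb U hU x hx y hy).trans hfsafs)
  · have hbound : ∀ x y : X, @dist X m'.toPseudoMetricSpace.toDist x y ≤ ((a * f s : ℝ≥0) : ℝ) := by
      intro x y
      rw [h']
      refine le_trans (min_le_right _ _) ?_
      have : (1:ℝ≥0) ≤ a * f s := hac.trans (mul_le_mul_right (hfm hsε) a)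
      exact_mod_cast this
    exact @trivialCover X m' n s _ hbound

lemma gdim_of_asdim (m m'' : MetricSpace X) {Sb : Set (ℝ≥0 → ℝ≥0)}
    (hSb : IsGlobalControlSemigroup Sb)
    (h'' : ∀ x y : X, x ≠ y → MDist m'' x y = max 1 (MDist m x y)) {n : ℕ}
    (H : @ASDimLE (TruncInf Sb) X m n) : @GDimLE Sb X m'' n := by
  simp only [MDist] at h''
  obtain ⟨g, ⟨⟨hgc, hgm, hginf, hgtop⟩, f, hfS, hgf⟩, s₀, hcov⟩ := H
  obtain ⟨hfc, hfm, hf0, hftop, hfz, hfinf⟩ := hSb.1 f hfS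
  obtain ⟨M, hgfeq⟩ := eventually_atTop.1 hgf
  obtain ⟨η₂, hη₂, hfid⟩ := nhdsGT_extract _ hfz
  set s₁ : ℝ≥0 := min (η₂ / 2) 2⁻¹ with hs₁def
  have hs₁ : 0 < s₁ := lt_min (by positivity) (by norm_num)
  have hs₁η₂ : s₁ < η₂ := lt_of_le_of_lt (min_le_left _ _) (NNReal.half_lt_self hη₂.ne')
  have hs₁1 : s₁ < 1 := lt_of_le_of_lt (min_le_right _ _) (by rw [← NNReal.coe_lt_coe]; norm_num)
  set c₀ : ℝ≥0 := f s₁ with hc₀def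
  have hc₀ : 0 < c₀ := lt_of_lt_of_le hs₁ (hfid s₁ hs₁ hs₁η₂)
  set T : ℝ≥0 := max (max s₀ M) s₁ with hTdef
  set C : ℝ≥0 := max 1 (f T) with hCdef
  have hC1 : (1:ℝ≥0) ≤ C := le_max_left _ _
  set a : ℝ≥0 := 1 + C / c₀ with hadef
  have ha1 : (1:ℝ≥0) ≤ a := le_self_add
  have haC : C ≤ a * c₀ := by
    rw [hadef, add_mul, one_mul, div_mul_cancel₀ _ hc₀.ne']
    exact le_add_self
  have hgT : g T = f T := hgfeq T ((le_max_right s₀ M).trans (le_max_left _ _))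
  refine ⟨(fun x => a * x) ∘ f, hSb.2.2 _ (linear_mem hSb a ha1) f hfS, fun s hs => ?_⟩
  have hkey : ∀ s : ℝ≥0, s₁ ≤ s → C ≤ a * f s :=
    fun s hss => haC.trans (mul_le_mul_right (hfm hss) a)
  rcases le_total s s₁ with hss₁ | hss₁
  · refine @singletonCover X m'' n s _ fun x y hxy => ?_
    rw [h'' x y hxy]
    refine lt_of_lt_of_le ?_ (le_max_left _ _)
    exact_mod_cast lt_of_le_of_lt hss₁ hs₁1
  · rcases le_total s T with hsT | hsT
    · obtain ⟨𝒰, hcover, hprop⟩ := hcov T ((le_max_left s₀ M).trans (le_max_left _ _))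
      refine ⟨𝒰, hcover, fun i => ⟨?_, ?_⟩⟩
      · intro U hU V hV hUV x hx y hy
        have hd := (hprop i).1 U hU V hV hUV x hx y hy
        have hsd : (s:ℝ) < @dist X m.toPseudoMetricSpace.toDist x y :=
          lt_of_le_of_lt (by exact_mod_cast hsT) hd
        have hxy : x ≠ y := by
          rintro rfl
          rw [@dist_self X m.toPseudoMetricSpace] at hsd
          exact absurd hsd (not_lt.2 s.coe_nonneg)
        rw [h'' x y hxy]
        exact lt_of_lt_of_le hsd (le_max_right _ _)
      · rw [@boundedBy_iff X m'']
        have hb := (@boundedBy_iff X m (g T) (𝒰 i)).1 (hprop i).2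
        intro U hU x hx y hy
        by_cases hxy : x = y
        · subst hxy
          rw [@dist_self X m''.toPseudoMetricSpace]
          exact NNReal.coe_nonneg _
        · rw [h'' x y hxy]
          have hd : @dist X m.toPseudoMetricSpace.toDist x y ≤ (f T : ℝ) := by
            have := hb U hU x hx y hy
            rwa [hgT] at this
          have : max (1:ℝ) (@dist X m.toPseudoMetricSpace.toDist x y) ≤ (C : ℝ) := by
            rw [hCdef]
            push_cast
            exact max_le_max le_rfl hd
          exact this.trans (by exact_mod_cast hkey s hss₁)
    · obtain ⟨𝒰, hcover, hprop⟩ := hcov s (le_trans ((le_max_left s₀ M).trans (le_max_left _ _)) hsT)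
      have hgs : g s = f s := hgfeq s (le_trans ((le_max_right s₀ M).trans (le_max_left _ _)) hsT)
      refine ⟨𝒰, hcover, fun i => ⟨?_, ?_⟩⟩
      · intro U hU V hV hUV x hx y hy
        have hd := (hprop i).1 U hU V hV hUV x hx y hy
        have hxy : x ≠ y := by
          rintro rfl
          rw [@dist_self X m.toPseudoMetricSpace] at hd
          exact absurd hd (not_lt.2 s.coe_nonneg)
        rw [h'' x y hxy]
        exact lt_of_lt_of_le hd (le_max_right _ _)
      · rw [@boundedBy_iff X m'']
        have hb := (@boundedBy_iff X m (g s) (𝒰 i)).1 (hprop i).2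
        intro U hU x hx y hy
        by_cases hxy : x = y
        · subst hxy
          rw [@dist_self X m''.toPseudoMetricSpace]
          exact NNReal.coe_nonneg _
        · rw [h'' x y hxy]
          have hd : @dist X m.toPseudoMetricSpace.toDist x y ≤ (f s : ℝ) := by
            have := hb U hU x hx y hy
            rwa [hgs] at this
          refine max_le ?_ ?_
          · have h1C : (1:ℝ≥0) ≤ a * f s := hC1.trans (hkey s hss₁)
            exact_mod_cast h1C
          · refine hd.trans ?_
            have : f s ≤ a * f s := le_mul_of_one_le_left zero_le ha1
            exact_mod_cast this
end DimAux

/-- `smdim_{Trunc_{**}(S̄)} X = m-dim_S̄ X` and `asdim_{Trunc^{**}(S̄)} X = M-dim_S̄ X`,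
where `m-dim` and `M-dim` are the global dimensions with respect to
`d'_1 = min(d,1)` and `d''_1` (`d''_1(x,y) = max (1, d(x,y))` for `x ≠ y`). -/
theorem smdim_trunc_and_asdim_trunc (X : Type*) (m : MetricSpace X)
    (Sb : Set (ℝ≥0 → ℝ≥0)) (hSb : IsGlobalControlSemigroup Sb)
    (m' m'' : MetricSpace X)
    (h' : ∀ x y : X, MDist m' x y = min (MDist m x y) 1)
    (h'' : ∀ x y : X, x ≠ y → MDist m'' x y = max 1 (MDist m x y)) :
    @SMDim (TruncZero Sb) X m = @GDim Sb X m' ∧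
    @ASDim (TruncInf Sb) X m = @GDim Sb X m'' := by
  constructor
  · have hiff : ∀ k : ℕ, @SMDimLE (TruncZero Sb) X m k ↔ @GDimLE Sb X m' k :=
      fun k => ⟨fun H => DimAux.gdim_of_smdim m m' hSb h' H,
        fun H => DimAux.smdim_of_gdim m m' hSb h' H⟩
    simp only [SMDim, GDim]
    congr 1
    ext k
    constructor <;> rintro ⟨j, rfl, h⟩
    · exact ⟨j, rfl, (hiff j).1 h⟩
    · exact ⟨j, rfl, (hiff j).2 h⟩
  · have hiff : ∀ k : ℕ, @ASDimLE (TruncInf Sb) X m k ↔ @GDimLE Sb X m'' k :=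
      fun k => ⟨fun H => DimAux.gdim_of_asdim m m'' hSb h'' H,
        fun H => DimAux.asdim_of_gdim m m'' hSb h'' H⟩
    simp only [ASDim, GDim]
    congr 1
    ext k
    constructor <;> rintro ⟨j, rfl, h⟩
    · exact ⟨j, rfl, (hiff j).1 h⟩
    · exact ⟨j, rfl, (hiff j).2 h⟩
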